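/- For the simple random walk on the complete graph Kₙ on n ≥ 2 vertices (transition rates Q(x,y) = 1/(n−1) for x ≠ y, uniform reversible measure), and for any positive density ρ and function ψ, the discrete Bochner quantity satisfies B(ρ,ψ) ≥ ((n+2)/(2(n−1))) A(ρ,ψ), where A(ρ,ψ) = (1/2)Σ_{x,y}(ψ(y)−ψ(x))²θ(ρ(x),ρ(y))Q(x,y)π(x) and B is defined by B(ρ,ψ) = (1/2)⟨L̂ρ·∇ψ,∇ψ⟩_π − ⟨ρ̂·∇ψ, ∇Lψ⟩_π. -/

import Mathlib

/-- The logarithmic mean `θ(s,t) = ∫₀¹ s^(1-p) t^p dp`. -/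
noncomputable def logMean (s t : ℝ) : ℝ := ∫ p in (0:ℝ)..1, s ^ (1 - p) * t ^ p

/-- Partial derivative of the logarithmic mean in the first argument. -/
noncomputable def logMean₁ (s t : ℝ) : ℝ := deriv (fun u => logMean u t) s

/-- Partial derivative of the logarithmic mean in the second argument. -/
noncomputable def logMean₂ (s t : ℝ) : ℝ := deriv (fun v => logMean s v) t

/-- Generator of simple random walk on the complete graph `Kₙ`,
with rates `Q(x,y) = 1/(n-1)` for `x ≠ y`. -/
noncomputable def Kgen (n : ℕ) (f : Fin n → ℝ) (x : Fin n) : ℝ :=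
  ∑ y, (if x = y then 0 else (1 : ℝ) / (n - 1)) * (f y - f x)

open Real Set
open MeasureTheory (volume)
open scoped Interval

lemma cont_rpow_base {s : ℝ} (hs : 0 < s) : Continuous (fun p : ℝ => s ^ p) := by
  have : (fun p : ℝ => s ^ p) = fun p => Real.exp (Real.log s * p) := by
    funext p; rw [Real.rpow_def_of_pos hs]
  rw [this]; exact Real.continuous_exp.comp (continuous_const.mul continuous_id)

lemma cont_mix {s t : ℝ} (hs : 0 < s) (ht : 0 < t) :
    Continuous (fun p : ℝ => s ^ (1 - p) * t ^ p) :=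
  ((cont_rpow_base hs).comp (continuous_const.sub continuous_id)).mul (cont_rpow_base ht)

lemma intInt_mix {s t : ℝ} (hs : 0 < s) (ht : 0 < t) :
    IntervalIntegrable (fun p : ℝ => s ^ (1 - p) * t ^ p) volume 0 1 :=
  (cont_mix hs ht).intervalIntegrable 0 1

lemma logMean_self {r : ℝ} (hr : 0 < r) : logMean r r = r := by
  unfold logMean
  have : ∀ p : ℝ, r ^ (1 - p) * r ^ p = r := by
    intro p
    rw [← Real.rpow_add hr]; norm_num
  simp_rw [this]
  simp

lemma logMean_nonneg {s t : ℝ} (hs : 0 < s) (ht : 0 < t) : 0 ≤ logMean s t := by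
  unfold logMean
  apply intervalIntegral.integral_nonneg (by norm_num)
  intro u _
  positivity

lemma two_logMean_le {s t : ℝ} (hs : 0 < s) (ht : 0 < t) : 2 * logMean s t ≤ s + t := by
  have h1 : logMean s t ≤ (s + t) / 2 := by
    unfold logMean
    have key : ∀ p ∈ Icc (0:ℝ) 1, s ^ (1 - p) * t ^ p ≤ (1 - p) * s + p * t := by
      intro p hp
      exact Real.geom_mean_le_arith_mean2_weighted (by linarith [hp.2]) hp.1 hs.le ht.le
        (by ring)
    calc ∫ p in (0:ℝ)..1, s ^ (1 - p) * t ^ p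
        ≤ ∫ p in (0:ℝ)..1, ((1 - p) * s + p * t) := by
          apply intervalIntegral.integral_mono_on (by norm_num) (intInt_mix hs ht)
          · apply Continuous.intervalIntegrable; continuity
          · exact key
      _ = (s + t) / 2 := by
          rw [intervalIntegral.integral_add, intervalIntegral.integral_mul_const,
            intervalIntegral.integral_mul_const, intervalIntegral.integral_sub,
            integral_id, integral_one]
          · ring
          · exact intervalIntegrable_const
          · exact (continuous_id.intervalIntegrable 0 1)
          · apply Continuous.intervalIntegrable; continuity
          · apply Continuous.intervalIntegrable; continuity
  linarith

lemma meas_mix {u t : ℝ} (hu : 0 < u) (ht : 0 < t) :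
    MeasureTheory.AEStronglyMeasurable (fun p : ℝ => u ^ (1 - p) * t ^ p)
      (volume.restrict (Ι (0:ℝ) 1)) :=
  (cont_mix hu ht).aestronglyMeasurable

lemma rpow_le_max {a p : ℝ} (ha : 0 ≤ a) (hb : a ≤ b) (hp0 : 0 ≤ p) (hp1 : p ≤ 1) :
    a ^ p ≤ max 1 b := by
  calc a ^ p ≤ (max 1 b) ^ p :=
        Real.rpow_le_rpow ha (le_trans hb (le_max_right 1 b)) hp0
    _ ≤ (max 1 b) ^ (1:ℝ) :=
        Real.rpow_le_rpow_of_exponent_le (le_max_left 1 b) hp1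
    _ = max 1 b := Real.rpow_one _

lemma hasDerivAt_logMean_fst {s t : ℝ} (hs : 0 < s) (ht : 0 < t) :
    HasDerivAt (fun u => logMean u t)
      (∫ p in (0:ℝ)..1, (1 - p) * s ^ (-p) * t ^ p) s := by
  have hIoc : Ι (0:ℝ) 1 = Ioc (0:ℝ) 1 := Set.uIoc_of_le (by norm_num)
  have ε_pos : (0:ℝ) < s / 2 := by linarith
  have main := intervalIntegral.hasDerivAt_integral_of_dominated_loc_of_deriv_le
    (F := fun u p => u ^ (1 - p) * t ^ p)
    (F' := fun u p => (1 - p) * u ^ (-p) * t ^ p)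
    (x₀ := s) (a := (0:ℝ)) (b := (1:ℝ)) (μ := volume)
    (bound := fun _ => max 1 (2 / s) * max 1 t) (Metric.ball_mem_nhds s ε_pos)
    (by filter_upwards [eventually_gt_nhds hs] with x hx using meas_mix hx ht)
    (intInt_mix hs ht)
    (((((continuous_const.sub continuous_id).mul
        ((cont_rpow_base hs).comp continuous_neg)).mul
        (cont_rpow_base ht))).aestronglyMeasurable)
    (Filter.Eventually.of_forall fun p hp x hx => ?_)
    intervalIntegrable_const
    (Filter.Eventually.of_forall fun p hp x hx => ?_)
  · exact main.2
  · -- bound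
    rw [hIoc] at hp
    rw [Metric.mem_ball, Real.dist_eq, abs_sub_lt_iff] at hx
    have hx0 : 0 < x := by linarith [hx.2]
    have hp0 : 0 < p := hp.1
    have hp1 : p ≤ 1 := hp.2
    have h1 : x ^ (-p) = (x⁻¹) ^ p := by
      rw [Real.inv_rpow hx0.le, Real.rpow_neg hx0.le]
    have hA : x ^ (-p) ≤ max 1 (2 / s) := by
      rw [h1]
      apply rpow_le_max (by positivity) ?_ hp0.le hp1
      calc x⁻¹ ≤ (s/2)⁻¹ := inv_anti₀ (by positivity) (by linarith [hx.2])
        _ = 2 / s := by rw [inv_div]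
    have hB : t ^ p ≤ max 1 t := rpow_le_max ht.le le_rfl hp0.le hp1
    have hxp : (0:ℝ) ≤ x ^ (-p) := (Real.rpow_pos_of_pos hx0 _).le
    have htp : (0:ℝ) ≤ t ^ p := (Real.rpow_pos_of_pos ht _).le
    have h1p : |1 - p| ≤ 1 := by rw [abs_le]; constructor <;> linarith
    rw [norm_eq_abs, abs_mul, abs_mul, abs_of_nonneg hxp, abs_of_nonneg htp]
    calc |1 - p| * x ^ (-p) * t ^ p ≤ 1 * (max 1 (2/s)) * (max 1 t) := by
          apply mul_le_mul (mul_le_mul h1p hA hxp (by norm_num)) hB htp (by positivity)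
      _ = max 1 (2/s) * max 1 t := by ring
  · -- differentiability
    rw [Metric.mem_ball, Real.dist_eq, abs_sub_lt_iff] at hx
    have hx0 : 0 < x := by linarith [hx.2]
    have := (Real.hasDerivAt_rpow_const (x := x) (p := 1 - p)
      (Or.inl hx0.ne')).mul_const (t ^ p)
    have he : (1:ℝ) - p - 1 = -p := by ring
    rw [he] at this
    exact this

lemma hasDerivAt_logMean_snd {s t : ℝ} (hs : 0 < s) (ht : 0 < t) :
    HasDerivAt (fun v => logMean s v)
      (∫ p in (0:ℝ)..1, p * s ^ (1 - p) * t ^ (p - 1)) t := by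
  have hIoc : Ι (0:ℝ) 1 = Ioc (0:ℝ) 1 := Set.uIoc_of_le (by norm_num)
  have ε_pos : (0:ℝ) < t / 2 := by linarith
  have main := intervalIntegral.hasDerivAt_integral_of_dominated_loc_of_deriv_le
    (F := fun v p => s ^ (1 - p) * v ^ p)
    (F' := fun v p => p * s ^ (1 - p) * v ^ (p - 1))
    (x₀ := t) (a := (0:ℝ)) (b := (1:ℝ)) (μ := volume)
    (bound := fun _ => max 1 s * max 1 (2 / t)) (Metric.ball_mem_nhds t ε_pos)
    (by filter_upwards [eventually_gt_nhds ht] with x hx using meas_mix hs hx)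
    (intInt_mix hs ht)
    ((((continuous_id.mul
        ((cont_rpow_base hs).comp (continuous_const.sub continuous_id))).mul
        ((cont_rpow_base ht).comp (continuous_id.sub continuous_const)))).aestronglyMeasurable)
    (Filter.Eventually.of_forall fun p hp x hx => ?_)
    intervalIntegrable_const
    (Filter.Eventually.of_forall fun p hp x hx => ?_)
  · exact main.2
  · -- bound
    rw [hIoc] at hp
    rw [Metric.mem_ball, Real.dist_eq, abs_sub_lt_iff] at hx
    have hx0 : 0 < x := by linarith [hx.2]
    have hp0 : 0 < p := hp.1
    have hp1 : p ≤ 1 := hp.2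
    have h1 : x ^ (p - 1) = (x⁻¹) ^ (1 - p) := by
      rw [Real.inv_rpow hx0.le, ← Real.rpow_neg hx0.le]
      norm_num
    have hA : x ^ (p - 1) ≤ max 1 (2 / t) := by
      rw [h1]
      apply rpow_le_max (by positivity) ?_ (by linarith) (by linarith)
      calc x⁻¹ ≤ (t/2)⁻¹ := inv_anti₀ (by positivity) (by linarith [hx.2])
        _ = 2 / t := by rw [inv_div]
    have hB : s ^ (1 - p) ≤ max 1 s := rpow_le_max hs.le le_rfl (by linarith) (by linarith)
    have hxp : (0:ℝ) ≤ x ^ (p - 1) := (Real.rpow_pos_of_pos hx0 _).le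
    have hsp : (0:ℝ) ≤ s ^ (1 - p) := (Real.rpow_pos_of_pos hs _).le
    have h1p : |p| ≤ 1 := by rw [abs_le]; constructor <;> linarith
    rw [norm_eq_abs, abs_mul, abs_mul, abs_of_nonneg hsp, abs_of_nonneg hxp]
    calc |p| * s ^ (1 - p) * x ^ (p - 1) ≤ 1 * (max 1 s) * (max 1 (2/t)) := by
          apply mul_le_mul (mul_le_mul h1p hB hsp (by norm_num)) hA hxp (by positivity)
      _ = max 1 s * max 1 (2/t) := by ring
  · -- differentiability
    rw [Metric.mem_ball, Real.dist_eq, abs_sub_lt_iff] at hx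
    have hx0 : 0 < x := by linarith [hx.2]
    have := (Real.hasDerivAt_rpow_const (x := x) (p := p)
      (Or.inl hx0.ne')).const_mul (s ^ (1 - p))
    exact this.congr_deriv (by ring)

lemma logMean₁_eq {s t : ℝ} (hs : 0 < s) (ht : 0 < t) :
    logMean₁ s t = ∫ p in (0:ℝ)..1, (1 - p) * s ^ (-p) * t ^ p :=
  (hasDerivAt_logMean_fst hs ht).deriv

lemma logMean₂_eq {s t : ℝ} (hs : 0 < s) (ht : 0 < t) :
    logMean₂ s t = ∫ p in (0:ℝ)..1, p * s ^ (1 - p) * t ^ (p - 1) :=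
  (hasDerivAt_logMean_snd hs ht).deriv

lemma pointwise_tangent {s t r p : ℝ} (hs : 0 < s) (ht : 0 < t) (hr : 0 < r)
    (hp0 : 0 ≤ p) (hp1 : p ≤ 1) :
    r ≤ s ^ (1 - p) * t ^ p + (1 - p) * s ^ (-p) * t ^ p * (r - s)
        + p * s ^ (1 - p) * t ^ (p - 1) * (r - t) := by
  have e1 : s ^ (1 - p) = s * s ^ (-p) := by
    rw [show (1:ℝ) - p = 1 + (-p) by ring, Real.rpow_add hs, Real.rpow_one]
  have e2 : t ^ (p - 1) = t ^ p * t⁻¹ := by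
    rw [show p - 1 = p + (-1) by ring, Real.rpow_add ht, Real.rpow_neg_one]
  have hX : 0 < s ^ (-p) := Real.rpow_pos_of_pos hs _
  have hY : 0 < t ^ p := Real.rpow_pos_of_pos ht _
  have hXp : 0 < s ^ p := Real.rpow_pos_of_pos hs _
  set P₁ : ℝ := r * (s ^ (-p) * t ^ p) with hP₁
  have hP₁pos : 0 < P₁ := by positivity
  have hP₂pos : 0 < P₁ * (s / t) := by positivity
  have key := Real.geom_mean_le_arith_mean2_weighted
    (by linarith : (0:ℝ) ≤ 1 - p) hp0 hP₁pos.le hP₂pos.le (by ring)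
  have hval : P₁ ^ (1 - p) * (P₁ * (s / t)) ^ p = r := by
    rw [Real.mul_rpow hP₁pos.le (by positivity), ← mul_assoc,
      ← Real.rpow_add hP₁pos, show (1:ℝ) - p + p = 1 by ring, Real.rpow_one,
      Real.div_rpow hs.le ht.le, hP₁, Real.rpow_neg hs.le]
    field_simp
  rw [hval] at key
  have hRHS : s ^ (1 - p) * t ^ p + (1 - p) * s ^ (-p) * t ^ p * (r - s)
        + p * s ^ (1 - p) * t ^ (p - 1) * (r - t)
      = (1 - p) * P₁ + p * (P₁ * (s / t)) := by
    rw [e1, e2, hP₁]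
    field_simp
    ring
  linarith [key]

lemma logMean_tangent {s t r : ℝ} (hs : 0 < s) (ht : 0 < t) (hr : 0 < r) :
    r - logMean s t ≤ logMean₁ s t * (r - s) + logMean₂ s t * (r - t) := by
  rw [logMean₁_eq hs ht, logMean₂_eq hs ht]
  have i1 : IntervalIntegrable (fun p : ℝ => s ^ (1 - p) * t ^ p) volume 0 1 :=
    intInt_mix hs ht
  have c2 : Continuous (fun p : ℝ => (1 - p) * s ^ (-p) * t ^ p * (r - s)) :=
    (((continuous_const.sub continuous_id).mul
      ((cont_rpow_base hs).comp continuous_neg)).mul (cont_rpow_base ht)).mul continuous_const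
  have c3 : Continuous (fun p : ℝ => p * s ^ (1 - p) * t ^ (p - 1) * (r - t)) :=
    ((continuous_id.mul
      ((cont_rpow_base hs).comp (continuous_const.sub continuous_id))).mul
      ((cont_rpow_base ht).comp (continuous_id.sub continuous_const))).mul continuous_const
  have i2 : IntervalIntegrable (fun p : ℝ => (1 - p) * s ^ (-p) * t ^ p * (r - s))
      volume 0 1 := c2.intervalIntegrable 0 1
  have i3 : IntervalIntegrable (fun p : ℝ => p * s ^ (1 - p) * t ^ (p - 1) * (r - t))
      volume 0 1 := c3.intervalIntegrable 0 1
  have comb : logMean s t + (∫ p in (0:ℝ)..1, (1 - p) * s ^ (-p) * t ^ p) * (r - s)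
      + (∫ p in (0:ℝ)..1, p * s ^ (1 - p) * t ^ (p - 1)) * (r - t)
      = ∫ p in (0:ℝ)..1, (s ^ (1 - p) * t ^ p + (1 - p) * s ^ (-p) * t ^ p * (r - s)
          + p * s ^ (1 - p) * t ^ (p - 1) * (r - t)) := by
    rw [intervalIntegral.integral_add (i1.add i2) i3,
      intervalIntegral.integral_add i1 i2,
      intervalIntegral.integral_mul_const, intervalIntegral.integral_mul_const]
    simp only [logMean]
  have hmono : r ≤ ∫ p in (0:ℝ)..1, (s ^ (1 - p) * t ^ p
      + (1 - p) * s ^ (-p) * t ^ p * (r - s)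
      + p * s ^ (1 - p) * t ^ (p - 1) * (r - t)) := by
    have : r = ∫ _ in (0:ℝ)..1, r ∂MeasureTheory.volume := by simp
    conv_lhs => rw [this]
    apply intervalIntegral.integral_mono_on (by norm_num) intervalIntegrable_const
      ((i1.add i2).add i3)
    intro p hp
    exact pointwise_tangent hs ht hr hp.1 hp.2
  linarith [hmono, comb]


lemma Kgen_eq (n : ℕ) (f : Fin n → ℝ) (x : Fin n) :
    Kgen n f x = (1 / ((n:ℝ) - 1)) * ((∑ z, f z) - n * f x) := by
  unfold Kgen
  have h : ∀ y ∈ Finset.univ, (if x = y then 0 else (1:ℝ)/((n:ℝ)-1)) * (f y - f x)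
      = (1/((n:ℝ)-1)) * (f y - f x) := by
    intro y _
    by_cases h : x = y <;> simp [h]
  rw [Finset.sum_congr rfl h, ← Finset.mul_sum, Finset.sum_sub_distrib,
    Finset.sum_const, Finset.card_univ, Fintype.card_fin, nsmul_eq_mul]


/-- Discrete Bochner inequality for the complete graph `Kₙ` (the Bernoulli–Laplace
model with `k = 1`): `B(ρ,ψ) ≥ ((n+2)/(2(n-1))) A(ρ,ψ)`, with
`Q(x,y) = 1/(n-1)` for `x ≠ y`, uniform measure `π = 1/n`,
`B(ρ,ψ) = ½⟨L̂ρ·∇ψ,∇ψ⟩_π − ⟨ρ̂·∇ψ,∇Lψ⟩_π` and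
`A(ρ,ψ) = ½ Σ_{x,y} (ψ(y)-ψ(x))² θ(ρ(x),ρ(y)) Q(x,y) π(x)`. -/
theorem completeGraph_bochner (n : ℕ) (hn : 2 ≤ n)
    (ρ : Fin n → ℝ) (hρ : ∀ x, 0 < ρ x) (ψ : Fin n → ℝ) :
    (1/2) * ((1/2) * ∑ x, ∑ y,
        (logMean₁ (ρ x) (ρ y) * Kgen n ρ x + logMean₂ (ρ x) (ρ y) * Kgen n ρ y) *
          (ψ y - ψ x) * (ψ y - ψ x) *
          (if x = y then 0 else (1 : ℝ) / (n - 1)) * ((1:ℝ)/n))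
      - (1/2) * ∑ x, ∑ y,
          logMean (ρ x) (ρ y) * (ψ y - ψ x) * (Kgen n ψ y - Kgen n ψ x) *
            (if x = y then 0 else (1 : ℝ) / (n - 1)) * ((1:ℝ)/n)
      ≥ (((n : ℝ) + 2) / (2 * ((n : ℝ) - 1))) *
        ((1/2) * ∑ x, ∑ y, (ψ y - ψ x)^2 * logMean (ρ x) (ρ y) *
          (if x = y then 0 else (1 : ℝ) / (n - 1)) * ((1:ℝ)/n)) := by
  have hn2 : (2:ℝ) ≤ (n:ℝ) := by exact_mod_cast hn
  have hn1 : (0:ℝ) < (n:ℝ) - 1 := by linarith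
  have hn0 : (0:ℝ) < (n:ℝ) := by linarith
  set w : ℝ := 1 / ((n:ℝ) - 1) with hw
  have hwpos : 0 < w := by positivity
  rw [ge_iff_le, ← sub_nonneg]
  have key : ∀ x y : Fin n, 0 ≤
      (1/4) * ((logMean₁ (ρ x) (ρ y) * Kgen n ρ x + logMean₂ (ρ x) (ρ y) * Kgen n ρ y) *
          (ψ y - ψ x) * (ψ y - ψ x) * (if x = y then 0 else w) * ((1:ℝ)/n))
      - (1/2) * (logMean (ρ x) (ρ y) * (ψ y - ψ x) * (Kgen n ψ y - Kgen n ψ x) *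
          (if x = y then 0 else w) * ((1:ℝ)/n))
      - (((n:ℝ)+2)/(2*((n:ℝ)-1))) * ((1/2) * ((ψ y - ψ x)^2 * logMean (ρ x) (ρ y) *
          (if x = y then 0 else w) * ((1:ℝ)/n))) := by
    intro x y
    by_cases hxy : x = y
    · simp [hxy]
    · rw [if_neg hxy]
      have hKψ : Kgen n ψ y - Kgen n ψ x = -((n:ℝ) * w) * (ψ y - ψ x) := by
        rw [Kgen_eq, Kgen_eq, hw]; ring
      set θ : ℝ := logMean (ρ x) (ρ y) with hθ
      have hθ0 : 0 ≤ θ := logMean_nonneg (hρ x) (hρ y)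
      have hθ2 : 2 * θ ≤ ρ x + ρ y := two_logMean_le (hρ x) (hρ y)
      -- lower bound for the L̂ term
      have hsum_ineq : ∀ z, ρ z - θ ≤
          logMean₁ (ρ x) (ρ y) * (ρ z - ρ x) + logMean₂ (ρ x) (ρ y) * (ρ z - ρ y) := by
        intro z
        have := logMean_tangent (hρ x) (hρ y) (hρ z)
        linarith
      have hS : ρ x + ρ y ≤ ∑ z, ρ z := by
        have hsub : ({x, y} : Finset (Fin n)).sum ρ ≤ Finset.univ.sum ρ :=
          Finset.sum_le_sum_of_subset_of_nonneg (Finset.subset_univ _)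
            (fun i _ _ => (hρ i).le)
        rwa [Finset.sum_pair hxy] at hsub
      have hsum : (∑ z, (ρ z - θ)) ≤
          ∑ z, (logMean₁ (ρ x) (ρ y) * (ρ z - ρ x) + logMean₂ (ρ x) (ρ y) * (ρ z - ρ y)) :=
        Finset.sum_le_sum fun z _ => hsum_ineq z
      have hsumval : (∑ z, (ρ z - θ)) = (∑ z, ρ z) - (n:ℝ) * θ := by
        rw [Finset.sum_sub_distrib, Finset.sum_const, Finset.card_univ,
          Fintype.card_fin, nsmul_eq_mul]
      have hexp : (∑ z, (logMean₁ (ρ x) (ρ y) * (ρ z - ρ x) + logMean₂ (ρ x) (ρ y) * (ρ z - ρ y)))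
          = logMean₁ (ρ x) (ρ y) * ((∑ z, ρ z) - (n:ℝ) * ρ x)
            + logMean₂ (ρ x) (ρ y) * ((∑ z, ρ z) - (n:ℝ) * ρ y) := by
        simp only [Finset.sum_add_distrib, Finset.sum_sub_distrib, ← Finset.mul_sum,
          Finset.sum_const, Finset.card_univ, Fintype.card_fin, nsmul_eq_mul,
          smul_eq_mul]
        try ring
      have hLhat : -(((n:ℝ) - 2) * w * θ) ≤
          logMean₁ (ρ x) (ρ y) * Kgen n ρ x + logMean₂ (ρ x) (ρ y) * Kgen n ρ y := by
        rw [Kgen_eq, Kgen_eq]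
        have h1 : -(((n:ℝ) - 2) * θ) ≤
            logMean₁ (ρ x) (ρ y) * ((∑ z, ρ z) - (n:ℝ) * ρ x)
            + logMean₂ (ρ x) (ρ y) * ((∑ z, ρ z) - (n:ℝ) * ρ y) := by
          rw [← hexp]
          have := hsum
          rw [hsumval] at this
          nlinarith [hS, hθ2, hθ0]
        calc -(((n:ℝ) - 2) * w * θ) = w * (-(((n:ℝ) - 2) * θ)) := by ring
          _ ≤ w * (logMean₁ (ρ x) (ρ y) * ((∑ z, ρ z) - (n:ℝ) * ρ x)
              + logMean₂ (ρ x) (ρ y) * ((∑ z, ρ z) - (n:ℝ) * ρ y)) :=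
            mul_le_mul_of_nonneg_left h1 hwpos.le
          _ = 1 / ((n:ℝ) - 1) * ((∑ z, ρ z) - ↑n * ρ x) * logMean₁ (ρ x) (ρ y)
              + 1 / ((n:ℝ) - 1) * ((∑ z, ρ z) - ↑n * ρ y) * logMean₂ (ρ x) (ρ y) := by
            rw [hw]; ring
          _ = _ := by ring
      rw [hKψ]
      have hc : ((n:ℝ)+2)/(2*((n:ℝ)-1)) = (n:ℝ)*w - ((n:ℝ)-2)*w/2 := by
        rw [hw]; field_simp; ring
      rw [hc]
      have hfinal : (1/4) * ((logMean₁ (ρ x) (ρ y) * Kgen n ρ x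
            + logMean₂ (ρ x) (ρ y) * Kgen n ρ y) *
          (ψ y - ψ x) * (ψ y - ψ x) * w * ((1:ℝ)/n))
        - (1/2) * (θ * (ψ y - ψ x) * (-((n:ℝ) * w) * (ψ y - ψ x)) * w * ((1:ℝ)/n))
        - ((n:ℝ)*w - ((n:ℝ)-2)*w/2) * ((1/2) * ((ψ y - ψ x)^2 * θ * w * ((1:ℝ)/n)))
        = (w * (1/n) * (ψ y - ψ x)^2 / 4) *
          ((logMean₁ (ρ x) (ρ y) * Kgen n ρ x + logMean₂ (ρ x) (ρ y) * Kgen n ρ y)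
            + ((n:ℝ) - 2) * w * θ) := by ring
      rw [hfinal]
      apply mul_nonneg
      · have h1n : (0:ℝ) ≤ 1/(n:ℝ) := by positivity
        positivity
      · linarith [hLhat]
  calc (0:ℝ) ≤ ∑ x : Fin n, ∑ y : Fin n,
      ((1/4) * ((logMean₁ (ρ x) (ρ y) * Kgen n ρ x + logMean₂ (ρ x) (ρ y) * Kgen n ρ y) *
          (ψ y - ψ x) * (ψ y - ψ x) * (if x = y then 0 else w) * ((1:ℝ)/n))
      - (1/2) * (logMean (ρ x) (ρ y) * (ψ y - ψ x) * (Kgen n ψ y - Kgen n ψ x) *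
          (if x = y then 0 else w) * ((1:ℝ)/n))
      - (((n:ℝ)+2)/(2*((n:ℝ)-1))) * ((1/2) * ((ψ y - ψ x)^2 * logMean (ρ x) (ρ y) *
          (if x = y then 0 else w) * ((1:ℝ)/n)))) :=
      Finset.sum_nonneg fun x _ => Finset.sum_nonneg fun y _ => key x y
    _ = _ := by
      simp only [Finset.mul_sum, ← Finset.sum_sub_distrib]
      exact Finset.sum_congr rfl fun x _ => Finset.sum_congr rfl fun y _ => by ring
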